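/- Let K ≥ 1 and N > 4. Suppose v : [0,N]×[0,1] → ℝ can be written as v(x,y) = v₁(x)sin(πy) + v₂(x)sin(2πy) + E(x,y) where |v₁(x)| ≤ Kη/N, |E(x,y)| ≤ Kη/N, and |v₂(x) − sin(2πx/N)| ≤ Kη/N for all (x,y). Then there exist η₀ > 0 and A₀ depending only on K such that for all 0 < η < η₀ and all (x,y) with |x − N/2| ≤ 1/10, |y − 1/2| ≤ 1/4, and |x − N/2|·|y − 1/2| ≥ A₀η, one has v(x,y) ≠ 0. -/

import Mathlib

open Real

lemma abs_sin_lower (t : ℝ) (h : |t| ≤ π / 2) : 2 / π * |t| ≤ |Real.sin t| := by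
  have hpi := Real.pi_pos
  rcases le_or_gt 0 t with ht | ht
  · rw [abs_of_nonneg ht] at h ⊢
    rw [abs_of_nonneg (Real.sin_nonneg_of_nonneg_of_le_pi ht (by linarith))]
    exact Real.mul_le_sin ht h
  · rw [abs_of_neg ht] at h ⊢
    have : Real.sin t ≤ 0 := by
      have h2 := Real.sin_nonneg_of_nonneg_of_le_pi (show (0:ℝ) ≤ -t by linarith) (show -t ≤ π by linarith)
      rw [Real.sin_neg] at h2; linarith
    rw [abs_of_nonpos this, ← Real.sin_neg]
    exact Real.mul_le_sin (by linarith) h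

/-- Theorem 1.7(iii): with `v = v₁(x)sin(πy) + v₂(x)sin(2πy) + E(x,y)`,
`|v₁| ≤ Kη/N`, `|E| ≤ Kη/N`, `|v₂(x) − sin(2πx/N)| ≤ Kη/N`, the eigenfunction
`v` does not vanish at points near the center with
`|x − N/2||y − 1/2| ≥ A₀η`. -/
theorem stmt15 (K : ℝ) (hK : 1 ≤ K) :
    ∃ η₀ A₀ : ℝ, 0 < η₀ ∧ 0 < A₀ ∧
      ∀ (N η : ℝ) (v : ℝ → ℝ → ℝ) (v₁ v₂ : ℝ → ℝ) (E : ℝ → ℝ → ℝ),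
        4 < N → 0 < η → η < η₀ →
        (∀ x ∈ Set.Icc (0:ℝ) N, ∀ y ∈ Set.Icc (0:ℝ) 1,
          v x y = v₁ x * Real.sin (π * y) + v₂ x * Real.sin (2 * π * y) + E x y) →
        (∀ x ∈ Set.Icc (0:ℝ) N, |v₁ x| ≤ K * η / N) →
        (∀ x ∈ Set.Icc (0:ℝ) N, ∀ y ∈ Set.Icc (0:ℝ) 1, |E x y| ≤ K * η / N) →
        (∀ x ∈ Set.Icc (0:ℝ) N, |v₂ x - Real.sin (2 * π * x / N)| ≤ K * η / N) →
        ∀ x ∈ Set.Icc (0:ℝ) N, ∀ y ∈ Set.Icc (0:ℝ) 1,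
          |x - N / 2| ≤ 1 / 10 → |y - 1 / 2| ≤ 1 / 4 →
          A₀ * η ≤ |x - N / 2| * |y - 1 / 2| →
          v x y ≠ 0 := by
  refine ⟨1, K, one_pos, by linarith, ?_⟩
  intro N η v v₁ v₂ E hN hη hη1 hdec hv1 hE hv2 x hx y hy hux hwy hprod hv0
  have hpi := Real.pi_pos
  have hN0 : (0:ℝ) < N := by linarith
  set u := x - N / 2 with hu
  set w := y - 1 / 2 with hw
  clear_value u w
  -- sin identities
  have hsx : Real.sin (2 * π * x / N) = -Real.sin (2 * π * u / N) := by
    have : 2 * π * x / N = 2 * π * u / N + π := by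
      field_simp [hu]; linarith
    rw [this, Real.sin_add_pi]
  have hsy : Real.sin (2 * π * y) = -Real.sin (2 * π * w) := by
    have : 2 * π * y = 2 * π * w + π := by rw [hw]; ring
    rw [this, Real.sin_add_pi]
  -- lower bounds on sines
  have htx : |2 * π * u / N| ≤ π / 2 := by
    rw [abs_div, abs_of_pos hN0, div_le_iff₀ hN0, abs_mul, abs_of_pos (by positivity : (0:ℝ) < 2 * π)]
    nlinarith [abs_nonneg u]
  have hax : 4 * |u| / N ≤ |Real.sin (2 * π * u / N)| := by
    have := abs_sin_lower _ htx
    rw [abs_div, abs_of_pos hN0, abs_mul, abs_of_pos (by positivity : (0:ℝ) < 2 * π)] at this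
    have h2 : 2 / π * (2 * π * |u| / N) = 4 * |u| / N := by field_simp; ring
    linarith [h2 ▸ this]
  have hty : |2 * π * w| ≤ π / 2 := by
    rw [abs_mul, abs_of_pos (by positivity : (0:ℝ) < 2 * π)]
    nlinarith [abs_nonneg w]
  have hay : 4 * |w| ≤ |Real.sin (2 * π * w)| := by
    have := abs_sin_lower _ hty
    rw [abs_mul, abs_of_pos (by positivity : (0:ℝ) < 2 * π)] at this
    have h2 : 2 / π * (2 * π * |w|) = 4 * |w| := by field_simp; ring
    linarith [h2 ▸ this]
  have hby : |Real.sin (2 * π * w)| ≤ 1 := Real.abs_sin_le_one _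
  -- collect hypotheses at (x, y)
  have h1 := hv1 x hx
  have h2 := hE x hx y hy
  have h3 := hv2 x hx
  have hdec' := hdec x hx y hy
  rw [hv0] at hdec'
  -- |v₂ x| ≥ |sin(2πu/N)| - Kη/N
  have hKηN : (0:ℝ) < K * η / N := by positivity
  have hv2l : |Real.sin (2 * π * u / N)| - K * η / N ≤ |v₂ x| := by
    rw [hsx] at h3
    have h4 := abs_sub_abs_le_abs_sub (-Real.sin (2 * π * u / N)) (v₂ x)
    rw [abs_neg, abs_sub_comm] at h4
    linarith
  -- main term lower bound
  have hmain : 16 * |u| * |w| / N - K * η / N ≤ |v₂ x * Real.sin (2 * π * y)| := by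
    rw [abs_mul, hsy, abs_neg]
    have hb0 : (0:ℝ) ≤ |Real.sin (2 * π * w)| := abs_nonneg _
    have h5 : (|Real.sin (2 * π * u / N)| - K * η / N) * |Real.sin (2 * π * w)| ≤
        |v₂ x| * |Real.sin (2 * π * w)| := mul_le_mul_of_nonneg_right hv2l hb0
    have hab : (4 * |u| / N) * (4 * |w|) ≤ |Real.sin (2 * π * u / N)| * |Real.sin (2 * π * w)| :=
      mul_le_mul hax hay (by positivity) (abs_nonneg _)
    have hcb : (K * η / N) * |Real.sin (2 * π * w)| ≤ K * η / N := by nlinarith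
    have h5' : |Real.sin (2 * π * u / N)| * |Real.sin (2 * π * w)| -
        (K * η / N) * |Real.sin (2 * π * w)| ≤ |v₂ x| * |Real.sin (2 * π * w)| := by
      linear_combination h5
    have e1 : 4 * |u| / N = 4 * |u| * N⁻¹ := div_eq_mul_inv _ _
    have e2 : K * η / N = K * η * N⁻¹ := div_eq_mul_inv _ _
    rw [e1] at hab
    rw [e2] at hcb h5'
    have key : 16 * |u| * |w| * N⁻¹ - K * η * N⁻¹ ≤ |v₂ x| * |Real.sin (2 * π * w)| := by
      linarith
    calc 16 * |u| * |w| / N - K * η / N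
        = 16 * |u| * |w| * N⁻¹ - K * η * N⁻¹ := by rw [div_eq_mul_inv, div_eq_mul_inv]
      _ ≤ _ := key
  -- small terms
  have hsm1 : |v₁ x * Real.sin (π * y)| ≤ K * η / N := by
    rw [abs_mul]
    calc |v₁ x| * |Real.sin (π * y)| ≤ |v₁ x| * 1 :=
          mul_le_mul_of_nonneg_left (Real.abs_sin_le_one _) (abs_nonneg _)
      _ ≤ K * η / N := by linarith [h1]
  -- contradiction
  have h0 : v₂ x * Real.sin (2 * π * y) = -(v₁ x * Real.sin (π * y)) - E x y := by
    linarith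
  have habs : |v₂ x * Real.sin (2 * π * y)| ≤ 2 * (K * η / N) := by
    rw [h0]
    calc |-(v₁ x * Real.sin (π * y)) - E x y| ≤ |-(v₁ x * Real.sin (π * y))| + |E x y| :=
          abs_sub _ _
      _ ≤ 2 * (K * η / N) := by rw [abs_neg]; linarith
  have hfin := hmain.trans habs
  have hKη : 0 < K * η := by positivity
  have heq : (3:ℝ) * (K * η) / N = 3 * (K * η / N) := by ring
  have h6 : 16 * |u| * |w| / N ≤ 3 * (K * η) / N := by rw [heq]; linarith
  have h7 : 16 * |u| * |w| ≤ 3 * (K * η) := by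
    exact (div_le_div_iff_of_pos_right hN0).mp h6
  linarith [hprod, hKη, h7]
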